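/- Let m ≥ 1 be an integer, let a < b be reals, and let φ : [a,b] → ℝ be C^m and real valued with |φ^{(m)}(x)| ≥ c_m > 0 for all x ∈ (a,b); if m = 1 assume in addition that φ' is monotonic on (a,b). Let ψ : [a,b] → ℂ be C¹. Then for every μ > 0, |∫_a^b e^{iμφ(x)} ψ(x) dx| ≤ C_m (c_m μ)^{-1/m} [ min{|ψ(a)|, |ψ(b)|} + ∫_a^b |ψ'(x)| dx ], where C_m = 5·2^{m−1} − 2. -/

import Mathlib

open Set MeasureTheory intervalIntegral Filter

lemma vdc_norm_exp (r : ℝ) : ‖Complex.exp (Complex.I * (r:ℂ))‖ = 1 := by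
  rw [mul_comm]; exact Complex.norm_exp_ofReal_mul_I r

lemma vdc_le_on_Icc {f : ℝ → ℝ} {a b c : ℝ} (hab : a < b)
    (hf : ContinuousOn f (Icc a b)) (h : ∀ x ∈ Ioo a b, c ≤ f x) :
    ∀ x ∈ Icc a b, c ≤ f x := by
  intro x hx
  have hne : (nhdsWithin x (Ioo a b)).NeBot := by
    rw [← mem_closure_iff_nhdsWithin_neBot, closure_Ioo hab.ne]; exact hx
  have ht : Tendsto f (nhdsWithin x (Ioo a b)) (nhds (f x)) :=
    (hf x hx).mono Ioo_subset_Icc_self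
  refine ge_of_tendsto ht ?_
  filter_upwards [self_mem_nhdsWithin] with t ht'
  exact h t ht'

lemma vdc_mono_on_Icc {f : ℝ → ℝ} {a b : ℝ} (hab : a < b)
    (hf : ContinuousOn f (Icc a b)) (h : MonotoneOn f (Ioo a b)) :
    MonotoneOn f (Icc a b) := by
  have claim1 : ∀ x ∈ Icc a b, ∀ s ∈ Ioo a b, x < s → f x ≤ f s := by
    intro x hx s hs hxs
    have hsub : Ioo a s ⊆ Ioo a b := Ioo_subset_Ioo le_rfl hs.2.le
    have hne : (nhdsWithin x (Ioo a s)).NeBot := by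
      rw [← mem_closure_iff_nhdsWithin_neBot, closure_Ioo (hx.1.trans_lt hxs).ne]
      exact ⟨hx.1, hxs.le⟩
    have ht : Tendsto f (nhdsWithin x (Ioo a s)) (nhds (f x)) :=
      (hf x hx).mono (hsub.trans Ioo_subset_Icc_self)
    refine le_of_tendsto ht ?_
    filter_upwards [self_mem_nhdsWithin] with t ht'
    exact h (hsub ht') hs ht'.2.le
  intro x hx y hy hxy
  rcases eq_or_lt_of_le hxy with rfl|hxy
  · exact le_rfl
  have hne : (nhdsWithin y (Ioo x b)).NeBot := by
    rw [← mem_closure_iff_nhdsWithin_neBot, closure_Ioo (hxy.trans_le hy.2).ne]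
    exact ⟨hxy.le, hy.2⟩
  have ht : Tendsto f (nhdsWithin y (Ioo x b)) (nhds (f y)) :=
    (hf y hy).mono ((Ioo_subset_Ioo hx.1 le_rfl).trans Ioo_subset_Icc_self)
  refine ge_of_tendsto ht ?_
  filter_upwards [self_mem_nhdsWithin] with s hs
  exact claim1 x hx s ⟨hx.1.trans_lt hs.1, hs.2⟩ hs.1

lemma vdc_slope {f f' : ℝ → ℝ} {a b c : ℝ}
    (hd : ∀ x ∈ Icc a b, HasDerivWithinAt f (f' x) (Icc a b) x)
    (hc : ∀ x ∈ Icc a b, c ≤ f' x) :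
    ∀ x ∈ Icc a b, ∀ y ∈ Icc a b, x ≤ y → f x + c * (y - x) ≤ f y := by
  have hm : MonotoneOn (fun t => f t - c * t) (Icc a b) := by
    refine monotoneOn_of_hasDerivWithinAt_nonneg (f' := fun x => f' x - c) (convex_Icc a b)
      (ContinuousOn.sub (fun x hx => (hd x hx).continuousWithinAt) (by fun_prop)) ?_ ?_
    · intro x hx
      have hx' : x ∈ Icc a b := interior_subset hx
      have h1 : HasDerivWithinAt (fun t => c * t) c (interior (Icc a b)) x := by
        simpa using ((hasDerivAt_id x).const_mul c).hasDerivWithinAt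
      exact ((hd x hx').mono interior_subset).sub h1
    · intro x hx
      exact sub_nonneg.2 (hc x (interior_subset hx))
  intro x hx y hy hxy
  have := hm hx hy hxy
  simp only at this
  nlinarith

lemma vdc_sign {g : ℝ → ℝ} {a b c : ℝ} (hc : 0 < c) (hg : ContinuousOn g (Icc a b))
    (h1 : ∀ x ∈ Icc a b, c ≤ |g x|) :
    (∀ x ∈ Icc a b, c ≤ g x) ∨ (∀ x ∈ Icc a b, c ≤ -g x) := by
  by_contra hcon
  push_neg at hcon
  obtain ⟨⟨u, hu, hu'⟩, ⟨v, hv, hv'⟩⟩ := hcon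
  have hgu : g u ≤ -c := by have := h1 u hu; rcases abs_cases (g u) with ⟨h,_⟩|⟨h,_⟩ <;> linarith
  have hgv : c ≤ g v := by have := h1 v hv; rcases abs_cases (g v) with ⟨h,_⟩|⟨h,_⟩ <;> linarith
  have h0 : (0:ℝ) ∈ uIcc (g u) (g v) := by
    rw [Set.mem_uIcc]; left; constructor <;> linarith
  obtain ⟨w, hw, hw0⟩ := intermediate_value_uIcc (hg.mono (uIcc_subset_Icc hu hv)) h0
  have := h1 w (uIcc_subset_Icc hu hv hw)
  rw [hw0] at this; simp at this; linarith

lemma vdc_neg_integral (a b l : ℝ) (f : ℝ → ℝ) :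
    ‖∫ x in a..b, Complex.exp (Complex.I * ((l * (-f x) : ℝ) : ℂ))‖ =
    ‖∫ x in a..b, Complex.exp (Complex.I * ((l * f x : ℝ) : ℂ))‖ := by
  have key : ∀ x : ℝ, Complex.exp (Complex.I * ((l * (-f x) : ℝ) : ℂ)) =
      (starRingEnd ℂ) (Complex.exp (Complex.I * ((l * f x : ℝ) : ℂ))) := by
    intro x
    rw [← Complex.exp_conj]
    congr 1
    rw [map_mul, Complex.conj_I]
    rw [Complex.conj_ofReal]
    push_cast
    ring
  simp only [key]
  rw [show (∫ x in a..b, (starRingEnd ℂ) (Complex.exp (Complex.I * ((l * f x : ℝ) : ℂ)))) =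
      (starRingEnd ℂ) (∫ x in a..b, Complex.exp (Complex.I * ((l * f x : ℝ) : ℂ))) from ?_]
  · exact RCLike.norm_conj _
  · simp only [intervalIntegral, map_sub, integral_conj]

lemma vdc_base_smooth {Φ G G' : ℝ → ℝ} {a b l : ℝ} (hab : a ≤ b) (hl : 0 < l)
    (hΦ : ∀ x, HasDerivAt Φ (G x) x) (hG : ∀ x, HasDerivAt G (G' x) x)
    (hG'c : Continuous G')
    (hG1 : ∀ x, 1 ≤ G x) (hsign : (∀ x, 0 ≤ G' x) ∨ (∀ x, G' x ≤ 0)) :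
    ‖∫ x in a..b, Complex.exp (Complex.I * ((l * Φ x : ℝ) : ℂ))‖ ≤ 2 / l := by
  have hG0 : ∀ x, G x ≠ 0 := fun x => by have := hG1 x; positivity
  have hGc : Continuous G := continuous_iff_continuousAt.2 fun x => (hG x).continuousAt
  have hΦc : Continuous Φ := continuous_iff_continuousAt.2 fun x => (hΦ x).continuousAt
  set h : ℝ → ℝ := fun x => (G x)⁻¹ with hh_def
  have hh : ∀ x, HasDerivAt h (-G' x / (G x)^2) x := fun x => (hG x).inv (hG0 x)
  have hhc : Continuous h := hGc.inv₀ hG0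
  have hh'c : Continuous (fun x => -G' x / (G x)^2) :=
    (hG'c.neg).div (hGc.pow 2) (fun x => pow_ne_zero 2 (hG0 x))
  have hhpos : ∀ x, 0 < h x := fun x => by
    have := hG1 x; simp only [hh_def]; positivity
  have hhle : ∀ x, h x ≤ 1 := fun x => by
    have h1 := hG1 x
    simp only [hh_def]
    rw [inv_le_one_iff₀]; right; exact h1
  set u : ℝ → ℂ := fun x => Complex.exp (Complex.I * ((l * Φ x : ℝ) : ℂ)) with hu_def
  have hnu : ∀ x, ‖u x‖ = 1 := fun x => by
    simp only [hu_def]; rw [mul_comm]; exact Complex.norm_exp_ofReal_mul_I _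
  set u' : ℝ → ℂ := fun x => (Complex.I * l * G x) * u x with hu'_def
  have hu : ∀ x, HasDerivAt u (u' x) x := by
    intro x
    have h1 : HasDerivAt (fun y : ℝ => ((l * Φ y : ℝ) : ℂ)) ((l * G x : ℝ) : ℂ) x :=
      HasDerivAt.ofReal_comp (by simpa using (hΦ x).const_mul l)
    have h2 : HasDerivAt (fun y : ℝ => Complex.I * ((l * Φ y : ℝ) : ℂ))
        (Complex.I * ((l * G x : ℝ) : ℂ)) x := h1.const_mul Complex.I
    have := h2.cexp
    simp only [hu'_def, hu_def]
    convert this using 1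
    push_cast; ring
  set v : ℝ → ℂ := fun x => (h x : ℂ) / (Complex.I * l) with hv_def
  set v' : ℝ → ℂ := fun x => ((-G' x / (G x)^2 : ℝ) : ℂ) / (Complex.I * l) with hv'_def
  have hv : ∀ x, HasDerivAt v (v' x) x := fun x =>
    ((hh x).ofReal_comp).div_const _
  have hIl : (Complex.I * l) ≠ 0 :=
    mul_ne_zero Complex.I_ne_zero (by exact_mod_cast hl.ne')
  have huc : Continuous u :=
    Complex.continuous_exp.comp (continuous_const.mul (Complex.continuous_ofReal.comp
      (continuous_const.mul hΦc)))
  have hu'c : Continuous u' :=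
    (continuous_const.mul (Complex.continuous_ofReal.comp hGc)).mul huc
  have hv'c : Continuous v' :=
    (Complex.continuous_ofReal.comp hh'c).div_const _
  have key : ∀ x, u x = v x * u' x := by
    intro x
    have hGx : ((G x : ℝ) : ℂ) ≠ 0 := by exact_mod_cast hG0 x
    have hlx : ((l : ℝ) : ℂ) ≠ 0 := by exact_mod_cast hl.ne'
    simp only [hv_def, hu'_def, hh_def]
    push_cast
    field_simp
  have hInt : (∫ x in a..b, u x) = v b * u b - v a * u a - ∫ x in a..b, v' x * u x := by
    rw [intervalIntegral.integral_congr (g := fun x => v x * u' x) (fun x _ => key x)]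
    exact intervalIntegral.integral_mul_deriv_eq_deriv_mul
      (fun x _ => hv x) (fun x _ => hu x)
      (hv'c.intervalIntegrable a b)
      (hu'c.intervalIntegrable a b)
  have hFTC : (∫ x in a..b, (-G' x / (G x)^2)) = h b - h a :=
    intervalIntegral.integral_eq_sub_of_hasDerivAt (fun x _ => hh x)
      (hh'c.intervalIntegrable a b)
  have hnv : ∀ x, ‖v x‖ = h x / l := by
    intro x
    simp only [hv_def]
    rw [norm_div, Complex.norm_real, norm_mul, Complex.norm_I, one_mul, Complex.norm_real,
      Real.norm_eq_abs, Real.norm_eq_abs, abs_of_pos (hhpos x), abs_of_pos hl]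
  have hnv' : ∀ x, ‖v' x * u x‖ = |(-G' x / (G x)^2)| / l := by
    intro x
    rw [norm_mul, hnu, mul_one]
    simp only [hv'_def]
    rw [norm_div, Complex.norm_real, norm_mul, Complex.norm_I, one_mul, Complex.norm_real,
      Real.norm_eq_abs, Real.norm_eq_abs, abs_of_pos hl]
  have hIb : ‖∫ x in a..b, v' x * u x‖ ≤ (∫ x in a..b, |(-G' x / (G x)^2)|) / l := by
    refine (intervalIntegral.norm_integral_le_integral_norm hab).trans_eq ?_
    calc (∫ x in a..b, ‖v' x * u x‖) = ∫ x in a..b, |(-G' x / (G x)^2)| / l :=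
          intervalIntegral.integral_congr (fun x _ => hnv' x)
      _ = (∫ x in a..b, |(-G' x / (G x)^2)|) / l := intervalIntegral.integral_div _ _
  have hbound : ‖∫ x in a..b, u x‖ ≤ (h b + h a + ∫ x in a..b, |(-G' x / (G x)^2)|) / l := by
    rw [hInt]
    calc ‖v b * u b - v a * u a - ∫ x in a..b, v' x * u x‖
        ≤ ‖v b * u b - v a * u a‖ + ‖∫ x in a..b, v' x * u x‖ := norm_sub_le _ _
      _ ≤ (‖v b * u b‖ + ‖v a * u a‖) + ‖∫ x in a..b, v' x * u x‖ :=
          add_le_add (norm_sub_le _ _) le_rfl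
      _ ≤ (h b / l + h a / l) + (∫ x in a..b, |(-G' x / (G x)^2)|) / l := by
          rw [norm_mul, norm_mul, hnu, hnu, mul_one, mul_one, hnv, hnv]
          exact add_le_add le_rfl hIb
      _ = (h b + h a + ∫ x in a..b, |(-G' x / (G x)^2)|) / l := by ring
  refine hbound.trans ?_
  rcases hsign with hp | hp
  · have heq : ∀ x : ℝ, |(-G' x / (G x)^2)| = -(-G' x / (G x)^2) := by
      intro x
      rw [abs_of_nonpos]
      rw [neg_div]
      exact neg_nonpos.mpr (div_nonneg (hp x) (sq_nonneg _))
    have hInt2 : (∫ x in a..b, |(-G' x / (G x)^2)|) = h a - h b := by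
      rw [intervalIntegral.integral_congr (g := fun x => -(-G' x / (G x)^2))
        (fun x _ => heq x), intervalIntegral.integral_neg, hFTC]
      ring
    rw [hInt2, div_le_div_iff_of_pos_right hl]
    have h1 := hhle a
    have h2 := hhpos b
    linarith
  · have heq : ∀ x : ℝ, |(-G' x / (G x)^2)| = -G' x / (G x)^2 := by
      intro x
      rw [abs_of_nonneg]
      rw [neg_div]
      exact neg_nonneg.mpr (div_nonpos_of_nonpos_of_nonneg (hp x) (sq_nonneg _))
    have hInt2 : (∫ x in a..b, |(-G' x / (G x)^2)|) = h b - h a := by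
      rw [intervalIntegral.integral_congr (g := fun x => -G' x / (G x)^2)
        (fun x _ => heq x), hFTC]
    rw [hInt2, div_le_div_iff_of_pos_right hl]
    have h1 := hhle b
    have h2 := hhpos a
    linarith

lemma vdc_base {φ g : ℝ → ℝ} {a b l : ℝ} (hab : a ≤ b) (hl : 0 < l)
    (hd : ∀ x ∈ Icc a b, HasDerivWithinAt φ (g x) (Icc a b) x)
    (hgc : ContinuousOn g (Icc a b))
    (hg1 : ∀ x ∈ Icc a b, 1 ≤ g x)
    (hmono : MonotoneOn g (Icc a b) ∨ AntitoneOn g (Icc a b)) :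
    ‖∫ x in a..b, Complex.exp (Complex.I * ((l * φ x : ℝ) : ℂ))‖ ≤ 2 / l := by
  classical
  -- the clamp map
  set p : ℝ → ℝ := fun x => min b (max a x) with hp_def
  have hpmem : ∀ x, p x ∈ Icc a b := fun x =>
    ⟨le_min hab (le_max_left a x), min_le_left _ _⟩
  have hpid : ∀ x ∈ Icc a b, p x = x := by
    intro x hx
    simp only [hp_def]
    rw [max_eq_right hx.1, min_eq_right hx.2]
  have hpmono : Monotone p := fun x y hxy =>
    min_le_min le_rfl (max_le_max le_rfl hxy)
  have hpcont : Continuous p := continuous_const.min (continuous_const.max continuous_id)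
  set gb : ℝ → ℝ := fun x => g (p x) with hgb_def
  have hgbc : Continuous gb := hgc.comp_continuous hpcont hpmem
  have hgb1 : ∀ x, 1 ≤ gb x := fun x => hg1 _ (hpmem x)
  have hgbeq : ∀ x ∈ Icc a b, gb x = g x := fun x hx => by
    simp only [hgb_def]; rw [hpid x hx]
  have hgbmono : Monotone gb ∨ Antitone gb := by
    rcases hmono with h | h
    · exact Or.inl (fun x y hxy => h (hpmem x) (hpmem y) (hpmono hxy))
    · exact Or.inr (fun x y hxy => h (hpmem x) (hpmem y) (hpmono hxy))
  obtain ⟨B, hB⟩ := isCompact_Icc.exists_bound_of_continuousOn hgc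
  have hgbB : ∀ x, |gb x| ≤ B := fun x => hB _ (hpmem x)
  -- primitive of gb
  set G : ℝ → ℝ := fun x => ∫ t in a..x, gb t with hG_def
  have hG : ∀ x, HasDerivAt G (gb x) x := fun x =>
    (hgbc.integral_hasStrictDerivAt a x).hasDerivAt
  -- FTC for φ
  have hφeq : ∀ x ∈ Icc a b, φ x = φ a + G x := by
    intro x hx
    have hax : a ≤ x := hx.1
    have hsub : Icc a x ⊆ Icc a b := Icc_subset_Icc le_rfl hx.2
    have hc : ContinuousOn φ (Icc a x) := fun t ht =>
      (((hd t (hsub ht)).continuousWithinAt).mono hsub)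
    have hder : ∀ t ∈ Ioo a x, HasDerivWithinAt φ (gb t) (Ioi t) t := by
      intro t ht
      have htb : t ∈ Icc a b := ⟨ht.1.le, ht.2.le.trans hx.2⟩
      have hnb : Icc a b ∈ nhds t := Icc_mem_nhds ht.1 (ht.2.trans_le hx.2)
      have := ((hd t htb).hasDerivAt hnb).hasDerivWithinAt (s := Ioi t)
      rwa [hgbeq t htb]
    have hint : IntervalIntegrable gb volume a x := hgbc.intervalIntegrable a x
    have := intervalIntegral.integral_eq_sub_of_hasDeriv_right_of_le hax hc hder hint
    simp only [hG_def]
    linarith [this]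
  -- mollification
  set ε : ℕ → ℝ := fun n => 1 / (n + 1) with hε_def
  have hε : ∀ n, 0 < ε n := fun n => by positivity
  have hε0 : Tendsto ε atTop (nhds 0) := tendsto_one_div_add_atTop_nhds_zero_nat
  set gn : ℕ → ℝ → ℝ := fun n x => (G (x + ε n) - G x) / ε n with hgn_def
  have hGsub : ∀ x e : ℝ, G (x + e) - G x = ∫ t in x..(x + e), gb t := by
    intro x e
    simp only [hG_def]
    rw [intervalIntegral.integral_interval_sub_left (hgbc.intervalIntegrable a (x + e))
      (hgbc.intervalIntegrable a x)]
  have hgn_deriv : ∀ n x, HasDerivAt (gn n) ((gb (x + ε n) - gb x) / ε n) x := by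
    intro n x
    have h1 : HasDerivAt (fun y => G (y + ε n)) (gb (x + ε n)) x := by
      simpa [Function.comp_def] using (hG (x + ε n)).comp x ((hasDerivAt_id x).add_const (ε n))
    exact (h1.sub (hG x)).div_const _
  have hGc : Continuous G := continuous_iff_continuousAt.2 fun x => (hG x).continuousAt
  have hgn_cont : ∀ n, Continuous (gn n) := fun n =>
    ((hGc.comp (continuous_id.add continuous_const)).sub hGc).div_const _
  have hgn1 : ∀ n x, 1 ≤ gn n x := by
    intro n x
    have hle : x ≤ x + ε n := by linarith [hε n]
    have h1 : (∫ t in x..(x + ε n), (1:ℝ)) ≤ ∫ t in x..(x + ε n), gb t := by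
      apply intervalIntegral.integral_mono_on hle intervalIntegrable_const
        (hgbc.intervalIntegrable _ _)
      intro t _; exact hgb1 t
    rw [intervalIntegral.integral_const] at h1
    simp only [smul_eq_mul, mul_one] at h1
    simp only [hgn_def]
    rw [hGsub x (ε n), le_div_iff₀ (hε n), one_mul]
    linarith
  have hgnB : ∀ n x, |gn n x| ≤ B := by
    intro n x
    have hle : x ≤ x + ε n := by linarith [hε n]
    have h1 : ‖∫ t in x..(x + ε n), gb t‖ ≤ B * |x + ε n - x| :=
      intervalIntegral.norm_integral_le_of_norm_le_const fun t _ => hgbB t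
    simp only [add_sub_cancel_left, abs_of_pos (hε n)] at h1
    simp only [hgn_def]
    rw [hGsub x (ε n), abs_div, abs_of_pos (hε n), div_le_iff₀ (hε n)]
    simpa [Real.norm_eq_abs] using h1
  have hkey : ∀ n x, |gn n x - gb x| ≤ |gb (x + ε n) - gb x| := by
    intro n x
    have he := hε n
    have hle : x ≤ x + ε n := by linarith
    have h1 : gn n x - gb x = (∫ t in x..(x + ε n), (gb t - gb x)) / ε n := by
      rw [intervalIntegral.integral_sub (hgbc.intervalIntegrable _ _) intervalIntegrable_const,
        intervalIntegral.integral_const]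
      simp only [hgn_def, add_sub_cancel_left, smul_eq_mul]
      rw [hGsub x (ε n)]
      field_simp
    rcases hgbmono with hmm | hmm
    · have hnn : (0:ℝ) ≤ ∫ t in x..(x + ε n), (gb t - gb x) := by
        apply intervalIntegral.integral_nonneg hle
        intro t ht; exact sub_nonneg.2 (hmm ht.1)
      have hup : (∫ t in x..(x + ε n), (gb t - gb x)) ≤ ε n * (gb (x + ε n) - gb x) := by
        have := intervalIntegral.integral_mono_on (μ := MeasureTheory.volume) hle
          (((hgbc.sub continuous_const).intervalIntegrable _ _)) intervalIntegrable_const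
          (fun t ht => sub_le_sub_right (hmm ht.2) (gb x))
        rw [intervalIntegral.integral_const] at this
        simpa [smul_eq_mul, add_sub_cancel_left] using this
      rw [h1, abs_div, abs_of_pos he, div_le_iff₀ he]
      have h2 : (0:ℝ) ≤ gb (x + ε n) - gb x := sub_nonneg.2 (hmm hle)
      rw [abs_of_nonneg hnn, abs_of_nonneg h2]
      linarith
    · have hnn : (∫ t in x..(x + ε n), (gb t - gb x)) ≤ 0 := by
        have h0 : (0:ℝ) ≤ ∫ t in x..(x + ε n), (gb x - gb t) := by
          apply intervalIntegral.integral_nonneg hle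
          intro t ht; exact sub_nonneg.2 (hmm ht.1)
        have heq : (∫ t in x..(x + ε n), (gb x - gb t)) =
            - ∫ t in x..(x + ε n), (gb t - gb x) := by
          rw [← intervalIntegral.integral_neg]
          congr 1; funext t; ring
        rw [heq] at h0; linarith
      have hup : ε n * (gb (x + ε n) - gb x) ≤ ∫ t in x..(x + ε n), (gb t - gb x) := by
        have := intervalIntegral.integral_mono_on (μ := MeasureTheory.volume) hle
          intervalIntegrable_const (((hgbc.sub continuous_const).intervalIntegrable _ _))
          (fun t ht => sub_le_sub_right (hmm ht.2) (gb x))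
        rw [intervalIntegral.integral_const] at this
        simpa [smul_eq_mul, add_sub_cancel_left] using this
      rw [h1, abs_div, abs_of_pos he, div_le_iff₀ he]
      have h2 : gb (x + ε n) - gb x ≤ 0 := sub_nonpos.2 (hmm hle)
      rw [abs_of_nonpos hnn, abs_of_nonpos h2]
      linarith
  have hgn_tendsto : ∀ x, Tendsto (fun n => gn n x) atTop (nhds (gb x)) := by
    intro x
    have hxa : Tendsto (fun n => x + ε n) atTop (nhds x) := by
      have := (tendsto_const_nhds (x := x) (f := atTop (α := ℕ))).add hε0
      simpa using this
    have h2 : Tendsto (fun n => |gb (x + ε n) - gb x|) atTop (nhds 0) := by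
      have h3 : Tendsto (fun n => gb (x + ε n) - gb x) atTop (nhds 0) := by
        have := ((hgbc.tendsto x).comp hxa).sub (tendsto_const_nhds (x := gb x) (f := atTop (α := ℕ)))
        simpa using this
      simpa using h3.abs
    have h4 : Tendsto (fun n => gn n x - gb x) atTop (nhds 0) :=
      squeeze_zero_norm (fun n => hkey n x) h2
    have := h4.add (tendsto_const_nhds (x := gb x))
    simpa using this
  set Φn : ℕ → ℝ → ℝ := fun n x => φ a + ∫ t in a..x, gn n t with hΦn_def
  have hΦn_deriv : ∀ n x, HasDerivAt (Φn n) (gn n x) x := by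
    intro n x
    exact (((hgn_cont n).integral_hasStrictDerivAt a x).hasDerivAt).const_add (φ a)
  have hsign : ∀ n, (∀ x, 0 ≤ (gb (x + ε n) - gb x) / ε n) ∨
      (∀ x, (gb (x + ε n) - gb x) / ε n ≤ 0) := by
    intro n
    rcases hgbmono with hmm | hmm
    · exact Or.inl fun x => div_nonneg (sub_nonneg.2 (hmm (by linarith [hε n]))) (hε n).le
    · exact Or.inr fun x => div_nonpos_of_nonpos_of_nonneg
        (sub_nonpos.2 (hmm (by linarith [hε n]))) (hε n).le
  have hbn : ∀ n, ‖∫ x in a..b, Complex.exp (Complex.I * ((l * Φn n x : ℝ) : ℂ))‖ ≤ 2 / l :=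
    fun n => vdc_base_smooth hab hl (hΦn_deriv n) (hgn_deriv n)
      (((hgbc.comp (continuous_id.add continuous_const)).sub hgbc).div_const _)
      (hgn1 n) (hsign n)
  have hΦn_tendsto : ∀ x ∈ Icc a b, Tendsto (fun n => Φn n x) atTop (nhds (φ x)) := by
    intro x hx
    rw [hφeq x hx]
    have h1 : Tendsto (fun n => ∫ t in a..x, gn n t) atTop (nhds (∫ t in a..x, gb t)) := by
      apply intervalIntegral.tendsto_integral_filter_of_dominated_convergence
        (bound := fun _ => B)
      · exact Eventually.of_forall fun n => (hgn_cont n).aestronglyMeasurable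
      · exact Eventually.of_forall fun n => ae_of_all _ fun t _ => by
          simpa [Real.norm_eq_abs] using hgnB n t
      · exact intervalIntegrable_const
      · exact ae_of_all _ fun t _ => hgn_tendsto t
    simpa only [hΦn_def, hG_def] using
      (tendsto_const_nhds (x := φ a) (f := atTop (α := ℕ))).add h1
  have hcontexp : Continuous fun s : ℝ => Complex.exp (Complex.I * ((l * s : ℝ) : ℂ)) :=
    Complex.continuous_exp.comp (continuous_const.mul (Complex.continuous_ofReal.comp
      (continuous_const.mul continuous_id)))
  have hΦnc : ∀ n, Continuous (Φn n) := fun n =>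
    continuous_iff_continuousAt.2 fun x => (hΦn_deriv n x).continuousAt
  have hfinal : Tendsto
      (fun n => ∫ x in a..b, Complex.exp (Complex.I * ((l * Φn n x : ℝ) : ℂ))) atTop
      (nhds (∫ x in a..b, Complex.exp (Complex.I * ((l * φ x : ℝ) : ℂ)))) := by
    apply intervalIntegral.tendsto_integral_filter_of_dominated_convergence
      (bound := fun _ => 1)
    · exact Eventually.of_forall fun n =>
        (hcontexp.comp (hΦnc n)).aestronglyMeasurable
    · refine Eventually.of_forall fun n => ae_of_all _ fun t _ => ?_
      rw [mul_comm, Complex.norm_exp_ofReal_mul_I]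
    · exact intervalIntegrable_const
    · refine ae_of_all _ fun t ht => ?_
      rw [uIoc_of_le hab] at ht
      exact (hcontexp.tendsto (φ t)).comp (hΦn_tendsto t (Ioc_subset_Icc_self ht))
  exact le_of_tendsto hfinal.norm (Eventually.of_forall hbn)

lemma vdc_core (m : ℕ) (hm : 1 ≤ m) (φ : ℕ → ℝ → ℝ) (a b : ℝ) (hab : a ≤ b)
    (hd : ∀ k < m, ∀ x ∈ Icc a b, HasDerivWithinAt (φ k) (φ (k+1) x) (Icc a b) x)
    (hclast : ContinuousOn (φ m) (Icc a b))
    (hlast : ∀ x ∈ Icc a b, 1 ≤ |φ m x|)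
    (hmono : m = 1 → MonotoneOn (φ 1) (Icc a b) ∨ AntitoneOn (φ 1) (Icc a b))
    (l : ℝ) (hl : 0 < l) :
    ‖∫ x in a..b, Complex.exp (Complex.I * ((l * φ 0 x : ℝ) : ℂ))‖ ≤
      ((5:ℝ) * 2 ^ (m - 1) - 2) * l ^ (-1 / (m:ℝ)) := by
  induction m, hm using Nat.le_induction generalizing φ a b l with
  | base =>
    have hpow : l ^ (-1 / ((1:ℕ):ℝ)) = l⁻¹ := by
      norm_num
      exact Real.rpow_neg_one l
    have hconst : ((5:ℝ) * 2 ^ (1 - 1) - 2) = 3 := by norm_num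
    rw [hpow, hconst]
    have h23 : 2 / l ≤ 3 * l⁻¹ := by
      rw [div_eq_mul_inv]
      have h0 : (0:ℝ) ≤ l⁻¹ := inv_nonneg.2 hl.le
      nlinarith
    rcases vdc_sign one_pos hclast hlast with hpos | hneg
    · exact (vdc_base hab hl (hd 0 one_pos) hclast hpos (hmono rfl)).trans h23
    · have hmono' : MonotoneOn (fun x => -(φ 1 x)) (Icc a b) ∨
          AntitoneOn (fun x => -(φ 1 x)) (Icc a b) := by
        rcases hmono rfl with h | h
        · exact Or.inr h.neg
        · exact Or.inl h.neg
      have := vdc_base (φ := fun x => -(φ 0 x)) (g := fun x => -(φ 1 x)) hab hl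
        (fun x hx => (hd 0 one_pos x hx).neg) hclast.neg hneg hmono'
      rw [vdc_neg_integral a b l (φ 0)] at this
      exact this.trans h23
  | succ n hn ih =>
    have hnR : ((n:ℝ)) ≠ 0 := Nat.cast_ne_zero.2 (by omega)
    have hnR1 : ((n:ℝ)) + 1 ≠ 0 := by positivity
    set δ : ℝ := l ^ (-1 / ((n:ℝ) + 1)) with hδ_def
    have hδ : 0 < δ := Real.rpow_pos_of_pos hl _
    have hC3 : (3:ℝ) ≤ 5 * 2 ^ (n - 1) - 2 := by
      have h1 : (1:ℝ) ≤ 2 ^ (n - 1) := one_le_pow₀ one_le_two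
      linarith
    have hpow : (l * δ) ^ (-1 / (n:ℝ)) = δ := by
      have e1 : l * δ = l ^ (1 + -1 / ((n:ℝ) + 1)) := by
        rw [Real.rpow_add hl, Real.rpow_one, hδ_def]
      rw [e1, ← Real.rpow_mul hl.le, hδ_def]
      congr 1
      field_simp
      ring
    have main : ∀ ζ : ℕ → ℝ → ℝ,
        (∀ k < n + 1, ∀ x ∈ Icc a b, HasDerivWithinAt (ζ k) (ζ (k+1) x) (Icc a b) x) →
        ContinuousOn (ζ (n+1)) (Icc a b) →
        (∀ x ∈ Icc a b, 1 ≤ ζ (n+1) x) →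
        ‖∫ x in a..b, Complex.exp (Complex.I * ((l * ζ 0 x : ℝ) : ℂ))‖ ≤
          ((5:ℝ) * 2 ^ (n - 1) - 2) * δ * 2 + 2 * δ := by
      intro ζ hζd hζc hζ1
      set F : ℝ → ℝ := ζ n with hF_def
      have hFd : ∀ x ∈ Icc a b, HasDerivWithinAt F (ζ (n+1) x) (Icc a b) x :=
        hζd n (Nat.lt_succ_self n)
      have hFc : ContinuousOn F (Icc a b) := fun x hx => (hFd x hx).continuousWithinAt
      have hslope := vdc_slope hFd hζ1
      have hFmono : ∀ x ∈ Icc a b, ∀ y ∈ Icc a b, x ≤ y → F x ≤ F y := by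
        intro x hx y hy hxy; have := hslope x hx y hy hxy; nlinarith
      have hζ0c : ContinuousOn (ζ 0) (Icc a b) := fun x hx =>
        (hζd 0 (by omega) x hx).continuousWithinAt
      have hexpC : ContinuousOn (fun x => Complex.exp (Complex.I * ((l * ζ 0 x : ℝ) : ℂ)))
          (Icc a b) :=
        (Complex.continuous_exp.comp_continuousOn
          ((Complex.continuous_ofReal.comp_continuousOn (hζ0c.const_smul l)).const_smul
            Complex.I))
      have hint : ∀ u v : ℝ, u ∈ Icc a b → v ∈ Icc a b → u ≤ v →
          IntervalIntegrable (fun x => Complex.exp (Complex.I * ((l * ζ 0 x : ℝ) : ℂ)))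
            volume u v := by
        intro u v hu hv huv
        refine (hexpC.mono ?_).intervalIntegrable
        rw [uIcc_of_le huv]
        exact Icc_subset_Icc hu.1 hv.2
      -- the exceptional sets
      set S₁ : Set ℝ := Icc a b ∩ F ⁻¹' (Iic (-δ)) with hS₁_def
      set S₂ : Set ℝ := Icc a b ∩ F ⁻¹' (Ici δ) with hS₂_def
      have hS₁comp : IsCompact S₁ := isCompact_Icc.of_isClosed_subset
        (hFc.preimage_isClosed_of_isClosed isClosed_Icc isClosed_Iic) inter_subset_left
      have hS₂comp : IsCompact S₂ := isCompact_Icc.of_isClosed_subset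
        (hFc.preimage_isClosed_of_isClosed isClosed_Icc isClosed_Ici) inter_subset_left
      set p : ℝ := sSup (insert a S₁) with hp_def
      set q : ℝ := sInf (insert b S₂) with hq_def
      have hpA : p ∈ insert a S₁ :=
        (hS₁comp.insert a).sSup_mem (insert_nonempty a S₁)
      have hqA : q ∈ insert b S₂ :=
        (hS₂comp.insert b).sInf_mem (insert_nonempty b S₂)
      have hp_icc : p ∈ Icc a b := by
        rcases hpA with h | h
        · rw [h]; exact left_mem_Icc.2 hab
        · exact h.1
      have hq_icc : q ∈ Icc a b := by
        rcases hqA with h | h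
        · rw [h]; exact right_mem_Icc.2 hab
        · exact h.1
      have hap : a ≤ p := le_csSup (hS₁comp.insert a).bddAbove (mem_insert a S₁)
      have hqb : q ≤ b := csInf_le (hS₂comp.insert b).bddBelow (mem_insert b S₂)
      set r : ℝ := max p q with hr_def
      have hpr : p ≤ r := le_max_left _ _
      have hr_icc : r ∈ Icc a b := ⟨le_trans hp_icc.1 hpr, max_le hp_icc.2 hqb⟩
      -- applying the inductive hypothesis on subintervals
      have hIH : ∀ u v : ℝ, a ≤ u → u ≤ v → v ≤ b → (∀ x ∈ Icc u v, δ ≤ |F x|) →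
          ‖∫ x in u..v, Complex.exp (Complex.I * ((l * ζ 0 x : ℝ) : ℂ))‖ ≤
            ((5:ℝ) * 2 ^ (n - 1) - 2) * δ := by
        intro u v hau huv hvb habs
        have hsub : Icc u v ⊆ Icc a b := Icc_subset_Icc hau hvb
        have happ := ih (fun k x => ζ k x / δ) u v huv
          (fun k hk x hx => ((hζd k (by omega) x (hsub hx)).mono hsub).div_const δ)
          ((hFc.mono hsub).div_const δ)
          (fun x hx => by
            show (1:ℝ) ≤ |F x / δ|
            rw [abs_div, abs_of_pos hδ, le_div_iff₀ hδ, one_mul]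
            exact habs x hx)
          (fun hn1 => Or.inl (by
            intro x hx y hy hxy
            have hmono2 := hFmono x (hsub hx) y (hsub hy) hxy
            rw [hF_def, hn1] at hmono2
            show ζ 1 x / δ ≤ ζ 1 y / δ
            rw [div_le_div_iff_of_pos_right hδ]
            exact hmono2))
          (l * δ) (by positivity)
        rw [hpow] at happ
        have hmul : ∀ x : ℝ, l * δ * (ζ 0 x / δ) = l * ζ 0 x := fun x => by
          field_simp
        calc ‖∫ x in u..v, Complex.exp (Complex.I * ((l * ζ 0 x : ℝ) : ℂ))‖
            = ‖∫ x in u..v, Complex.exp (Complex.I * ((l * δ * (ζ 0 x / δ) : ℝ) : ℂ))‖ := by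
              refine congrArg norm ?_
              refine intervalIntegral.integral_congr fun x _ => ?_
              rw [hmul x]
          _ ≤ _ := happ
      -- left piece
      have hleft : ‖∫ x in a..p, Complex.exp (Complex.I * ((l * ζ 0 x : ℝ) : ℂ))‖ ≤
          ((5:ℝ) * 2 ^ (n - 1) - 2) * δ := by
        rcases hpA with h | h
        · rw [h, intervalIntegral.integral_same, norm_zero]
          positivity
        · refine hIH a p le_rfl hap hp_icc.2 ?_
          intro x hx
          have hx' : x ∈ Icc a b := ⟨hx.1, hx.2.trans hp_icc.2⟩
          have h1 : F x ≤ F p := hFmono x hx' p hp_icc hx.2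
          have h2 : F p ≤ -δ := h.2
          rw [abs_of_nonpos (by linarith)]
          linarith
      -- right piece
      have hright : ‖∫ x in r..b, Complex.exp (Complex.I * ((l * ζ 0 x : ℝ) : ℂ))‖ ≤
          ((5:ℝ) * 2 ^ (n - 1) - 2) * δ := by
        rcases hqA with h | h
        · have hrb : r = b := by
            rw [hr_def, h]
            exact max_eq_right hp_icc.2
          rw [hrb, intervalIntegral.integral_same, norm_zero]
          positivity
        · refine hIH r b hr_icc.1 hr_icc.2 le_rfl ?_
          intro x hx
          have hx' : x ∈ Icc a b := ⟨hr_icc.1.trans hx.1, hx.2⟩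
          have h1 : F q ≤ F x := hFmono q hq_icc x hx' (le_trans (le_max_right p q) hx.1)
          have h2 : δ ≤ F q := h.2
          rw [abs_of_nonneg (by linarith)]
          linarith
      -- middle piece
      have hmid : ‖∫ x in p..r, Complex.exp (Complex.I * ((l * ζ 0 x : ℝ) : ℂ))‖ ≤ 2 * δ := by
        have hb1 : ‖∫ x in p..r, Complex.exp (Complex.I * ((l * ζ 0 x : ℝ) : ℂ))‖ ≤
            1 * |r - p| := by
          apply intervalIntegral.norm_integral_le_of_norm_le_const
          intro x _
          rw [mul_comm, Complex.norm_exp_ofReal_mul_I]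
        rw [one_mul, abs_of_nonneg (sub_nonneg.2 hpr)] at hb1
        refine hb1.trans ?_
        rcases eq_or_lt_of_le hpr with heq | hlt
        · rw [← heq]; simp; positivity
        · have hpq : p < q := by
            by_contra hc
            push_neg at hc
            have hre : r = p := by rw [hr_def]; exact max_eq_left hc
            rw [hre] at hlt
            exact lt_irrefl p hlt
          have hrq : r = q := by rw [hr_def]; exact max_eq_right hpq.le
          -- -δ ≤ F p
          have hFp : -δ ≤ F p := by
            have hpb : p < b := hpq.trans_le hqb
            have hne : (nhdsWithin p (Ioc p b)).NeBot := by
              rw [← mem_closure_iff_nhdsWithin_neBot, closure_Ioc hpb.ne]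
              exact left_mem_Icc.2 hpb.le
            have htd : Tendsto F (nhdsWithin p (Ioc p b)) (nhds (F p)) :=
              (hFc p hp_icc).mono (fun x hx => ⟨hap.trans hx.1.le, hx.2⟩)
            refine ge_of_tendsto htd ?_
            filter_upwards [self_mem_nhdsWithin] with x hx
            have hxIcc : x ∈ Icc a b := ⟨hap.trans hx.1.le, hx.2⟩
            by_contra hcon
            push_neg at hcon
            have hxS : x ∈ S₁ := ⟨hxIcc, le_of_lt hcon⟩
            have : x ≤ p := le_csSup (hS₁comp.insert a).bddAbove (mem_insert_of_mem a hxS)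
            exact absurd this (not_le.2 hx.1)
          -- F q ≤ δ
          have hFq : F q ≤ δ := by
            have haq : a < q := lt_of_le_of_lt hap hpq
            have hne : (nhdsWithin q (Ico a q)).NeBot := by
              rw [← mem_closure_iff_nhdsWithin_neBot, closure_Ico haq.ne]
              exact right_mem_Icc.2 haq.le
            have htd : Tendsto F (nhdsWithin q (Ico a q)) (nhds (F q)) :=
              (hFc q hq_icc).mono (fun x hx => ⟨hx.1, (hx.2.le).trans hqb⟩)
            refine le_of_tendsto htd ?_
            filter_upwards [self_mem_nhdsWithin] with x hx
            have hxIcc : x ∈ Icc a b := ⟨hx.1, hx.2.le.trans hqb⟩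
            by_contra hcon
            push_neg at hcon
            have hxS : x ∈ S₂ := ⟨hxIcc, le_of_lt hcon⟩
            have : q ≤ x := csInf_le (hS₂comp.insert b).bddBelow (mem_insert_of_mem b hxS)
            exact absurd this (not_le.2 hx.2)
          have hsl := hslope p hp_icc q hq_icc hpq.le
          rw [hrq]
          nlinarith
      -- combine
      have e1 := intervalIntegral.integral_add_adjacent_intervals
        (hint a p (left_mem_Icc.2 hab) hp_icc hap)
        (hint p r hp_icc hr_icc hpr)
      have e2 := intervalIntegral.integral_add_adjacent_intervals
        (hint a r (left_mem_Icc.2 hab) hr_icc hr_icc.1)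
        (hint r b hr_icc (right_mem_Icc.2 hab) hr_icc.2)
      calc ‖∫ x in a..b, Complex.exp (Complex.I * ((l * ζ 0 x : ℝ) : ℂ))‖
          = ‖((∫ x in a..p, Complex.exp (Complex.I * ((l * ζ 0 x : ℝ) : ℂ))) +
              ∫ x in p..r, Complex.exp (Complex.I * ((l * ζ 0 x : ℝ) : ℂ))) +
              ∫ x in r..b, Complex.exp (Complex.I * ((l * ζ 0 x : ℝ) : ℂ))‖ := by
            rw [e1, e2]
        _ ≤ ‖((∫ x in a..p, Complex.exp (Complex.I * ((l * ζ 0 x : ℝ) : ℂ))) +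
              ∫ x in p..r, Complex.exp (Complex.I * ((l * ζ 0 x : ℝ) : ℂ)))‖ +
              ‖∫ x in r..b, Complex.exp (Complex.I * ((l * ζ 0 x : ℝ) : ℂ))‖ :=
            norm_add_le _ _
        _ ≤ (‖∫ x in a..p, Complex.exp (Complex.I * ((l * ζ 0 x : ℝ) : ℂ))‖ +
              ‖∫ x in p..r, Complex.exp (Complex.I * ((l * ζ 0 x : ℝ) : ℂ))‖) +
              ‖∫ x in r..b, Complex.exp (Complex.I * ((l * ζ 0 x : ℝ) : ℂ))‖ :=
            add_le_add (norm_add_le _ _) le_rfl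
        _ ≤ (((5:ℝ) * 2 ^ (n - 1) - 2) * δ + 2 * δ) + ((5:ℝ) * 2 ^ (n - 1) - 2) * δ :=
            add_le_add (add_le_add hleft hmid) hright
        _ = ((5:ℝ) * 2 ^ (n - 1) - 2) * δ * 2 + 2 * δ := by ring
    have hrhs : ((5:ℝ) * 2 ^ (n + 1 - 1) - 2) * l ^ (-1 / ((n+1 : ℕ):ℝ)) =
        ((5:ℝ) * 2 ^ (n - 1) - 2) * δ * 2 + 2 * δ := by
      have hexp : (-1 / ((n+1 : ℕ):ℝ)) = -1 / ((n:ℝ) + 1) := by push_cast; ring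
      rw [hexp, ← hδ_def]
      obtain ⟨k, rfl⟩ : ∃ k, n = k + 1 := ⟨n - 1, by omega⟩
      simp only [Nat.add_sub_cancel]
      rw [pow_succ]
      ring
    rw [hrhs]
    rcases vdc_sign one_pos hclast hlast with hpos | hneg
    · exact main φ hd hclast hpos
    · rw [← vdc_neg_integral a b l (φ 0)]
      have := main (fun k x => -(φ k x)) (fun k hk x hx => (hd k hk x hx).neg)
        hclast.neg hneg
      simpa using this

lemma vdc_anti_on_Icc {f : ℝ → ℝ} {a b : ℝ} (hab : a < b)
    (hf : ContinuousOn f (Icc a b)) (h : AntitoneOn f (Ioo a b)) :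
    AntitoneOn f (Icc a b) := by
  have := vdc_mono_on_Icc (f := fun x => -f x) hab hf.neg
    (fun x hx y hy hxy => neg_le_neg (h hx hy hxy))
  intro x hx y hy hxy
  have h2 := this hx hy hxy
  simpa using h2

theorem stmt_1
    (m : ℕ) (hm : 1 ≤ m) (a b : ℝ) (hab : a < b)
    (φ : ℝ → ℝ) (ψ : ℝ → ℂ) (cm : ℝ) (hcm : 0 < cm)
    (hφ : ContDiffOn ℝ m φ (Set.Icc a b))
    (hφm : ∀ x ∈ Set.Ioo a b, cm ≤ |iteratedDerivWithin m φ (Set.Icc a b) x|)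
    (hmono : m = 1 → (MonotoneOn (derivWithin φ (Set.Icc a b)) (Set.Ioo a b) ∨
        AntitoneOn (derivWithin φ (Set.Icc a b)) (Set.Ioo a b)))
    (hψ : ContDiffOn ℝ 1 ψ (Set.Icc a b))
    (μ : ℝ) (hμ : 0 < μ) :
    ‖∫ x in a..b, Complex.exp (Complex.I * ((μ * φ x : ℝ) : ℂ)) * ψ x‖ ≤
      ((5 : ℝ) * 2 ^ (m - 1) - 2) * (cm * μ) ^ (-1 / (m : ℝ)) *
        (min ‖ψ a‖ ‖ψ b‖ + ∫ x in a..b, ‖derivWithin ψ (Set.Icc a b) x‖) := by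
  have hU : UniqueDiffOn ℝ (Set.Icc a b) := uniqueDiffOn_Icc hab
  have hl : 0 < cm * μ := mul_pos hcm hμ
  set C : ℝ := ((5 : ℝ) * 2 ^ (m - 1) - 2) * (cm * μ) ^ (-1 / (m : ℝ)) with hC_def
  have hCpos : 0 < C := by
    have h1 : (1:ℝ) ≤ 2 ^ (m - 1) := one_le_pow₀ one_le_two
    have h2 : (0:ℝ) < (cm * μ) ^ (-1 / (m : ℝ)) := Real.rpow_pos_of_pos hl _
    have h3 : (3:ℝ) ≤ 5 * 2 ^ (m - 1) - 2 := by linarith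
    positivity
  set Φ : ℕ → ℝ → ℝ := fun k => iteratedDerivWithin k φ (Set.Icc a b) with hΦ_def
  have hchain : ∀ k < m, ∀ x ∈ Set.Icc a b,
      HasDerivWithinAt (Φ k) (Φ (k+1) x) (Set.Icc a b) x := by
    intro k hk x hx
    have hdiff : DifferentiableOn ℝ (Φ k) (Set.Icc a b) :=
      hφ.differentiableOn_iteratedDerivWithin (by exact_mod_cast hk) hU
    have h1 := (hdiff x hx).hasDerivWithinAt
    have h2 : Φ (k+1) x = derivWithin (Φ k) (Set.Icc a b) x := by
      simp only [hΦ_def]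
      rw [iteratedDerivWithin_succ]
    rwa [h2]
  have hcont : ContinuousOn (Φ m) (Set.Icc a b) :=
    hφ.continuousOn_iteratedDerivWithin le_rfl hU
  have habs : ∀ x ∈ Set.Icc a b, cm ≤ |Φ m x| :=
    vdc_le_on_Icc hab hcont.abs hφm
  have hmono' : m = 1 → MonotoneOn (Φ 1) (Set.Icc a b) ∨ AntitoneOn (Φ 1) (Set.Icc a b) := by
    intro h1
    have he : ∀ x ∈ Set.Icc a b, Φ 1 x = derivWithin φ (Set.Icc a b) x := by
      intro x hx
      simp only [hΦ_def]
      rw [iteratedDerivWithin_one]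
    have hc1 : ContinuousOn (Φ 1) (Set.Icc a b) := by rw [← h1]; exact hcont
    have hsub := Set.Ioo_subset_Icc_self (a := a) (b := b)
    rcases hmono h1 with hmm | hmm
    · refine Or.inl (vdc_mono_on_Icc hab hc1 ?_)
      intro x hx y hy hxy
      rw [he x (hsub hx), he y (hsub hy)]
      exact hmm hx hy hxy
    · refine Or.inr (vdc_anti_on_Icc hab hc1 ?_)
      intro x hx y hy hxy
      rw [he x (hsub hx), he y (hsub hy)]
      exact hmm hx hy hxy
  -- the oscillatory factor
  set E : ℝ → ℂ := fun t => Complex.exp (Complex.I * ((μ * φ t : ℝ) : ℂ)) with hE_def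
  have hφc : ContinuousOn φ (Set.Icc a b) := hφ.continuousOn
  have hK : ∀ u v : ℝ, u ∈ Set.Icc a b → v ∈ Set.Icc a b → u ≤ v →
      ‖∫ t in u..v, E t‖ ≤ C := by
    intro u v hu hv huv
    have hsub : Set.Icc u v ⊆ Set.Icc a b := Set.Icc_subset_Icc hu.1 hv.2
    have happ := vdc_core m hm (fun k t => Φ k t / cm) u v huv
      (fun k hk x hx => ((hchain k hk x (hsub hx)).mono hsub).div_const cm)
      ((hcont.mono hsub).div_const cm)
      (fun x hx => by
        show (1:ℝ) ≤ |Φ m x / cm|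
        rw [abs_div, abs_of_pos hcm, le_div_iff₀ hcm, one_mul]
        exact habs x (hsub hx))
      (fun h1 => by
        rcases hmono' h1 with hmm | hmm
        · refine Or.inl fun x hx y hy hxy => ?_
          show Φ 1 x / cm ≤ Φ 1 y / cm
          rw [div_le_div_iff_of_pos_right hcm]
          exact hmm (hsub hx) (hsub hy) hxy
        · refine Or.inr fun x hx y hy hxy => ?_
          show Φ 1 y / cm ≤ Φ 1 x / cm
          rw [div_le_div_iff_of_pos_right hcm]
          exact hmm (hsub hx) (hsub hy) hxy)
      (cm * μ) hl
    have hmul : ∀ t : ℝ, cm * μ * (Φ 0 t / cm) = μ * φ t := by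
      intro t
      have : Φ 0 t = φ t := by simp only [hΦ_def]; rw [iteratedDerivWithin_zero]
      rw [this]
      field_simp
    refine le_trans (le_of_eq ?_) happ
    refine congrArg norm ?_
    refine intervalIntegral.integral_congr fun t _ => ?_
    simp only [hE_def, hmul t]
  -- continuous extension of E
  set cl : ℝ → ℝ := fun t => min b (max a t) with hcl_def
  have hclmem : ∀ t, cl t ∈ Set.Icc a b := fun t =>
    ⟨le_min hab.le (le_max_left a t), min_le_left _ _⟩
  have hclid : ∀ t ∈ Set.Icc a b, cl t = t := by
    intro t ht
    simp only [hcl_def]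
    rw [max_eq_right ht.1, min_eq_right ht.2]
  have hclcont : Continuous cl := continuous_const.min (continuous_const.max continuous_id)
  set Eb : ℝ → ℂ := fun t => Complex.exp (Complex.I * ((μ * φ (cl t) : ℝ) : ℂ)) with hEb_def
  have hEbc : Continuous Eb := by
    have hφcl : Continuous fun t => φ (cl t) := hφc.comp_continuous hclcont hclmem
    exact Complex.continuous_exp.comp (continuous_const.mul
      (Complex.continuous_ofReal.comp (continuous_const.mul hφcl)))
  have hEbeq : ∀ t ∈ Set.Icc a b, Eb t = E t := by
    intro t ht
    simp only [hEb_def, hE_def, hclid t ht]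
  set F : ℝ → ℂ := fun x => ∫ t in a..x, Eb t with hF_def
  have hFd : ∀ x, HasDerivAt F (Eb x) x := fun x =>
    (hEbc.integral_hasStrictDerivAt a x).hasDerivAt
  have hFc : Continuous F := continuous_iff_continuousAt.2 fun x => (hFd x).continuousAt
  have hFbound : ∀ x ∈ Set.Icc a b, ‖F x‖ ≤ C := by
    intro x hx
    have hFeq : F x = ∫ t in a..x, E t := by
      refine intervalIntegral.integral_congr fun t ht => ?_
      rw [uIcc_of_le hx.1] at ht
      exact hEbeq t ⟨ht.1, ht.2.trans hx.2⟩
    rw [hFeq]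
    exact hK a x (left_mem_Icc.2 hab.le) hx hx.1
  set G : ℝ → ℂ := fun x => (∫ t in a..b, Eb t) - F x with hG_def
  have hGd : ∀ x, HasDerivAt G (-Eb x) x := fun x => by
    simpa [hG_def, Pi.sub_def] using (hasDerivAt_const x (∫ t in a..b, Eb t)).sub (hFd x)
  have hGc : Continuous G := continuous_const.sub hFc
  have hGeq : ∀ x ∈ Set.Icc a b, G x = ∫ t in x..b, Eb t := by
    intro x hx
    have hadj := intervalIntegral.integral_add_adjacent_intervals
      (hEbc.intervalIntegrable (μ := volume) a x) (hEbc.intervalIntegrable (μ := volume) x b)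
    simp only [hG_def, hF_def]
    rw [← hadj]; ring
  have hGbound : ∀ x ∈ Set.Icc a b, ‖G x‖ ≤ C := by
    intro x hx
    rw [hGeq x hx]
    have heq2 : (∫ t in x..b, Eb t) = ∫ t in x..b, E t := by
      refine intervalIntegral.integral_congr fun t ht => ?_
      rw [uIcc_of_le hx.2] at ht
      exact hEbeq t ⟨hx.1.trans ht.1, ht.2⟩
    rw [heq2]
    exact hK x b hx (right_mem_Icc.2 hab.le) hx.2
  have hGb : G b = 0 := by
    rw [hGeq b (right_mem_Icc.2 hab.le)]
    exact intervalIntegral.integral_same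
  have hFa : F a = 0 := intervalIntegral.integral_same
  -- ψ facts
  set ψd : ℝ → ℂ := derivWithin ψ (Set.Icc a b) with hψd_def
  have hψdiff : DifferentiableOn ℝ ψ (Set.Icc a b) := hψ.differentiableOn one_ne_zero
  have hψc : ContinuousOn ψ (Set.Icc a b) := hψ.continuousOn
  have hψdc : ContinuousOn ψd (Set.Icc a b) := hψ.continuousOn_derivWithin hU le_rfl
  have hψat : ∀ x ∈ Set.Ioo a b, HasDerivAt ψ (ψd x) x := fun x hx =>
    ((hψdiff x (Set.Ioo_subset_Icc_self hx)).hasDerivWithinAt).hasDerivAt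
      (Icc_mem_nhds hx.1 hx.2)
  -- integrability
  have hi1 : IntervalIntegrable (fun x => Eb x * ψ x) volume a b := by
    apply ContinuousOn.intervalIntegrable
    rw [uIcc_of_le hab.le]
    exact hEbc.continuousOn.mul hψc
  have hi2 : IntervalIntegrable (fun x => F x * ψd x) volume a b := by
    apply ContinuousOn.intervalIntegrable
    rw [uIcc_of_le hab.le]
    exact hFc.continuousOn.mul hψdc
  have hi3 : IntervalIntegrable (fun x => G x * ψd x) volume a b := by
    apply ContinuousOn.intervalIntegrable
    rw [uIcc_of_le hab.le]
    exact hGc.continuousOn.mul hψdc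
  -- FTC for F * ψ and G * ψ
  have hFTC1 : (∫ x in a..b, (Eb x * ψ x + F x * ψd x)) = F b * ψ b - F a * ψ a := by
    apply intervalIntegral.integral_eq_sub_of_hasDeriv_right_of_le hab.le
      (hFc.continuousOn.mul hψc)
    · intro x hx
      exact ((hFd x).mul (hψat x hx)).hasDerivWithinAt
    · exact hi1.add hi2
  have hFTC2 : (∫ x in a..b, ((-Eb x) * ψ x + G x * ψd x)) = G b * ψ b - G a * ψ a := by
    apply intervalIntegral.integral_eq_sub_of_hasDeriv_right_of_le hab.le
      (hGc.continuousOn.mul hψc)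
    · intro x hx
      exact ((hGd x).mul (hψat x hx)).hasDerivWithinAt
    · have : (fun x => (-Eb x) * ψ x + G x * ψd x) =
          fun x => -(Eb x * ψ x) + G x * ψd x := by funext x; ring
      rw [this]
      have hi1n : IntervalIntegrable (fun x => -(Eb x * ψ x)) volume a b := hi1.neg
      exact hi1n.add hi3
  have hmain1 : (∫ x in a..b, Eb x * ψ x) = F b * ψ b - ∫ x in a..b, F x * ψd x := by
    rw [intervalIntegral.integral_add hi1 hi2, hFa, zero_mul, sub_zero] at hFTC1
    exact eq_sub_of_add_eq hFTC1
  have hmain2 : (∫ x in a..b, Eb x * ψ x) = G a * ψ a + ∫ x in a..b, G x * ψd x := by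
    have hrw : (fun x => (-Eb x) * ψ x + G x * ψd x) =
        fun x => -(Eb x * ψ x) + G x * ψd x := by funext x; ring
    have hi1n : IntervalIntegrable (fun x => -(Eb x * ψ x)) volume a b := hi1.neg
    rw [hrw, intervalIntegral.integral_add hi1n hi3, intervalIntegral.integral_neg,
      hGb, zero_mul, zero_sub] at hFTC2
    linear_combination (-1 : ℂ) * hFTC2
  -- the two bounds
  have hIpos : 0 ≤ ∫ x in a..b, ‖ψd x‖ :=
    intervalIntegral.integral_nonneg hab.le (fun x _ => norm_nonneg _)
  have hsecond : ∀ (H : ℝ → ℂ), Continuous H → (∀ x ∈ Set.Icc a b, ‖H x‖ ≤ C) →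
      ‖∫ x in a..b, H x * ψd x‖ ≤ C * ∫ x in a..b, ‖ψd x‖ := by
    intro H hHc hHb
    calc ‖∫ x in a..b, H x * ψd x‖ ≤ ∫ x in a..b, ‖H x * ψd x‖ :=
          intervalIntegral.norm_integral_le_integral_norm hab.le
      _ ≤ ∫ x in a..b, C * ‖ψd x‖ := by
          apply intervalIntegral.integral_mono_on hab.le
          · apply ContinuousOn.intervalIntegrable
            rw [uIcc_of_le hab.le]
            exact (hHc.continuousOn.mul hψdc).norm
          · apply ContinuousOn.intervalIntegrable
            rw [uIcc_of_le hab.le]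
            exact continuousOn_const.mul hψdc.norm
          · intro x hx
            rw [norm_mul]
            exact mul_le_mul_of_nonneg_right (hHb x hx) (norm_nonneg _)
      _ = C * ∫ x in a..b, ‖ψd x‖ := intervalIntegral.integral_const_mul _ _
  have hEq0 : (∫ x in a..b, Complex.exp (Complex.I * ((μ * φ x : ℝ) : ℂ)) * ψ x) =
      ∫ x in a..b, Eb x * ψ x := by
    refine intervalIntegral.integral_congr fun x hx => ?_
    rw [uIcc_of_le hab.le] at hx
    rw [hEbeq x hx]
  rw [hEq0]
  rcases le_total ‖ψ a‖ ‖ψ b‖ with hmin | hmin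
  · rw [min_eq_left hmin, hmain2]
    calc ‖G a * ψ a + ∫ x in a..b, G x * ψd x‖
        ≤ ‖G a * ψ a‖ + ‖∫ x in a..b, G x * ψd x‖ := norm_add_le _ _
      _ ≤ C * ‖ψ a‖ + C * ∫ x in a..b, ‖ψd x‖ := by
          refine add_le_add ?_ (hsecond G hGc hGbound)
          rw [norm_mul]
          exact mul_le_mul_of_nonneg_right (hGbound a (left_mem_Icc.2 hab.le)) (norm_nonneg _)
      _ = C * (‖ψ a‖ + ∫ x in a..b, ‖ψd x‖) := by ring
  · rw [min_eq_right hmin, hmain1]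
    calc ‖F b * ψ b - ∫ x in a..b, F x * ψd x‖
        ≤ ‖F b * ψ b‖ + ‖∫ x in a..b, F x * ψd x‖ := norm_sub_le _ _
      _ ≤ C * ‖ψ b‖ + C * ∫ x in a..b, ‖ψd x‖ := by
          refine add_le_add ?_ (hsecond F hFc hFbound)
          rw [norm_mul]
          exact mul_le_mul_of_nonneg_right (hFbound b (right_mem_Icc.2 hab.le)) (norm_nonneg _)
      _ = C * (‖ψ b‖ + ∫ x in a..b, ‖ψd x‖) := by ring
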